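/- For every convex integer coalitional game (N,v) there exists a payoff vector x ∈ ℤ^N that belongs to the core of (N,v) and satisfies ⌊SV_i(N,v)⌋ ≤ x_i ≤ ⌈SV_i(N,v)⌉ for every player i ∈ N. -/
import Mathlib


open Finset

/-- A game is convex if marginal contributions increase with coalition size. -/
def IsConvex {α : Type*} [DecidableEq α] (v : Finset α → ℝ) : Prop :=
  ∀ (i : α) (S T : Finset α), S ⊆ T → i ∉ T →
    v (insert i S) - v S ≤ v (insert i T) - v T

/-- An integer game: every coalition value is an integer. -/
def IsIntegerGame {α : Type*} (v : Finset α → ℝ) : Prop :=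
  ∀ S : Finset α, ∃ z : ℤ, v S = (z : ℝ)

/-- A size-bounded game: `v S < |S|` for every nonempty coalition. -/
def IsSizeBounded {α : Type*} (v : Finset α → ℝ) : Prop :=
  ∀ S : Finset α, S.Nonempty → v S < (S.card : ℝ)

/-- A payoff vector belongs to the core. -/
def InCore {α : Type*} [Fintype α] [DecidableEq α] (v : Finset α → ℝ) (x : α → ℝ) : Prop :=
  (∑ i, x i) = v Finset.univ ∧ ∀ S : Finset α, v S ≤ ∑ i ∈ S, x i

/-- The set of players preceding `i` in the ordering `σ`. -/
def preSet {α : Type*} [Fintype α] [DecidableEq α]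
    (σ : α ≃ Fin (Fintype.card α)) (i : α) : Finset α :=
  Finset.univ.filter (fun j => σ j < σ i)

/-- The Shapley value of player `i`: average marginal contribution over all orderings. -/
noncomputable def SV {α : Type*} [Fintype α] [DecidableEq α]
    (v : Finset α → ℝ) (i : α) : ℝ :=
  (∑ σ : α ≃ Fin (Fintype.card α), (v (insert i (preSet σ i)) - v (preSet σ i))) /
    (Nat.factorial (Fintype.card α) : ℝ)

/-- The Harsanyi dividend of a coalition. -/
noncomputable def dividend {α : Type*} [DecidableEq α] (v : Finset α → ℝ) (S : Finset α) : ℝ :=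
  ∑ T ∈ S.powerset, (-1 : ℝ) ^ (S.card - T.card) * v T

/-- A positive game: all Harsanyi dividends are nonnegative. -/
def IsPositive {α : Type*} [DecidableEq α] (v : Finset α → ℝ) : Prop :=
  ∀ S : Finset α, 0 ≤ dividend v S

/-- The `c`-reduced game on player set `N \ {i}`. -/
noncomputable def reducedGame {α : Type*} [Fintype α] [DecidableEq α]
    (v : Finset α → ℝ) (i : α) (c : ℝ) : Finset {j : α // j ≠ i} → ℝ :=
  fun S =>
    if S = Finset.univ then v Finset.univ - c
    else if S = ∅ then 0
    else max (v (insert i (S.image Subtype.val)) - c) (v (S.image Subtype.val))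


set_option linter.unusedSectionVars false
set_option maxHeartbeats 1000000

section AuxRounding
variable {α : Type*} [Fintype α] [DecidableEq α]

def preS (S : Finset α) (σ : α ≃ Fin (Fintype.card α)) (m : ℕ) : Finset α :=
  S.filter (fun j => (σ j : ℕ) < m)

lemma preS_univ_eq (σ : α ≃ Fin (Fintype.card α)) (i : α) :
    preS Finset.univ σ (σ i : ℕ) = preSet σ i := by
  ext j
  simp only [preS, preSet, mem_filter, mem_univ, true_and, Fin.lt_def]

lemma preS_insert (S : Finset α) (σ : α ≃ Fin (Fintype.card α)) (i : α) (hi : i ∈ S) :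
    preS S σ ((σ i : ℕ) + 1) = insert i (preS S σ (σ i : ℕ)) := by
  ext j
  simp only [preS, mem_filter, mem_insert, Nat.lt_succ_iff]
  constructor
  · rintro ⟨hj, h⟩
    rcases eq_or_lt_of_le h with h | h
    · left; have : σ j = σ i := Fin.ext h; exact σ.injective this
    · right; exact ⟨hj, h⟩
  · rintro (rfl | ⟨hj, h⟩)
    · exact ⟨hi, le_rfl⟩
    · exact ⟨hj, le_of_lt h⟩

lemma preS_notMem (S : Finset α) (σ : α ≃ Fin (Fintype.card α)) (i : α) (hi : i ∉ S) :
    preS S σ ((σ i : ℕ) + 1) = preS S σ (σ i : ℕ) := by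
  ext j
  simp only [preS, mem_filter, Nat.lt_succ_iff]
  constructor
  · rintro ⟨hj, h⟩
    refine ⟨hj, lt_of_le_of_ne h (fun e => hi ?_)⟩
    have : σ j = σ i := Fin.ext e
    rwa [← σ.injective this]
  · rintro ⟨hj, h⟩; exact ⟨hj, le_of_lt h⟩

lemma preS_zero (S : Finset α) (σ : α ≃ Fin (Fintype.card α)) : preS S σ 0 = ∅ := by
  simp [preS]

lemma preS_top (S : Finset α) (σ : α ≃ Fin (Fintype.card α)) :
    preS S σ (Fintype.card α) = S := by
  ext j; simp [preS, (σ j).isLt]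

-- telescoping sum
lemma preS_telescope (v : Finset α → ℝ) (S : Finset α) (σ : α ≃ Fin (Fintype.card α)) :
    ∑ i ∈ S, (v (preS S σ ((σ i : ℕ) + 1)) - v (preS S σ (σ i : ℕ))) = v S - v ∅ := by
  have key : ∑ m ∈ Finset.range (Fintype.card α),
      (v (preS S σ (m + 1)) - v (preS S σ m)) = v S - v ∅ := by
    rw [Finset.sum_range_sub (fun m => v (preS S σ m))]
    rw [preS_top, preS_zero]
  rw [← key]
  have : ∑ m ∈ Finset.range (Fintype.card α), (v (preS S σ (m + 1)) - v (preS S σ m))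
      = ∑ k : Fin (Fintype.card α), (v (preS S σ ((k : ℕ) + 1)) - v (preS S σ (k : ℕ))) := by
    rw [Finset.sum_range fun m => _]
  rw [this, ← Equiv.sum_comp σ (fun k => v (preS S σ ((k : ℕ) + 1)) - v (preS S σ (k : ℕ)))]
  rw [← Finset.sum_subset (Finset.subset_univ S)]
  intro i _ hi
  rw [preS_notMem S σ i hi]; ring


-- the marginal vector of σ, summed over S, dominates v S
lemma marg_sum_ge (v : Finset α → ℝ) (hv0 : v ∅ = 0) (hconv : IsConvex v)
    (σ : α ≃ Fin (Fintype.card α)) (S : Finset α) :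
    v S ≤ ∑ i ∈ S, (v (insert i (preSet σ i)) - v (preSet σ i)) := by
  have h1 : ∀ i ∈ S, v (preS S σ ((σ i : ℕ) + 1)) - v (preS S σ (σ i : ℕ))
      ≤ v (insert i (preSet σ i)) - v (preSet σ i) := by
    intro i hi
    rw [preS_insert S σ i hi, ← preS_univ_eq σ i]
    refine hconv i _ _ (fun j hj => ?_) ?_
    · simp only [preS, mem_filter] at hj ⊢; exact ⟨mem_univ _, hj.2⟩
    · simp [preS]
  calc v S = v S - v ∅ := by rw [hv0]; ring
    _ = ∑ i ∈ S, (v (preS S σ ((σ i : ℕ) + 1)) - v (preS S σ (σ i : ℕ))) :=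
        (preS_telescope v S σ).symm
    _ ≤ _ := Finset.sum_le_sum h1

lemma marg_sum_eq (v : Finset α → ℝ) (hv0 : v ∅ = 0) (σ : α ≃ Fin (Fintype.card α)) :
    ∑ i, (v (insert i (preSet σ i)) - v (preSet σ i)) = v Finset.univ := by
  have := preS_telescope v (Finset.univ : Finset α) σ
  rw [hv0, sub_zero] at this
  rw [← this]
  refine Finset.sum_congr rfl (fun i _ => ?_)
  rw [preS_insert _ σ i (mem_univ i), preS_univ_eq]

lemma factorial_pos' : (0:ℝ) < (Nat.factorial (Fintype.card α) : ℝ) := by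
  exact_mod_cast Nat.factorial_pos _

lemma SV_sum_S (v : Finset α → ℝ) (S : Finset α) :
    ∑ i ∈ S, SV v i = (∑ σ : α ≃ Fin (Fintype.card α),
      ∑ i ∈ S, (v (insert i (preSet σ i)) - v (preSet σ i))) /
      (Nat.factorial (Fintype.card α) : ℝ) := by
  rw [Finset.sum_comm]
  rw [Finset.sum_div]
  rfl

lemma SV_core_ge (v : Finset α → ℝ) (hv0 : v ∅ = 0) (hconv : IsConvex v) (S : Finset α) :
    v S ≤ ∑ i ∈ S, SV v i := by
  rw [SV_sum_S]
  rw [le_div_iff₀ factorial_pos']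
  have : ∀ σ : α ≃ Fin (Fintype.card α),
      v S ≤ ∑ i ∈ S, (v (insert i (preSet σ i)) - v (preSet σ i)) :=
    fun σ => marg_sum_ge v hv0 hconv σ S
  calc v S * (Nat.factorial (Fintype.card α) : ℝ)
      = ∑ _σ : α ≃ Fin (Fintype.card α), v S := by
        rw [Finset.sum_const, nsmul_eq_mul, mul_comm]
        congr 2
        rw [← Fintype.card, Fintype.card_equiv (Fintype.equivFin α)]
    _ ≤ _ := Finset.sum_le_sum (fun σ _ => this σ)

lemma SV_sum_eq (v : Finset α → ℝ) (hv0 : v ∅ = 0) :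
    ∑ i, SV v i = v Finset.univ := by
  rw [SV_sum_S]
  rw [div_eq_iff (ne_of_gt (factorial_pos' (α := α)))]
  calc ∑ σ : α ≃ Fin (Fintype.card α), ∑ i, (v (insert i (preSet σ i)) - v (preSet σ i))
      = ∑ _σ : α ≃ Fin (Fintype.card α), v Finset.univ :=
        Finset.sum_congr rfl (fun σ _ => marg_sum_eq v hv0 σ)
    _ = v Finset.univ * (Nat.factorial (Fintype.card α) : ℝ) := by
        rw [Finset.sum_const, nsmul_eq_mul, mul_comm]
        congr 2
        rw [← Fintype.card, Fintype.card_equiv (Fintype.equivFin α)]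

end AuxRounding

section AuxSuper
variable {α : Type*} [DecidableEq α]

lemma supermodular (v : Finset α → ℝ) (hconv : IsConvex v) (S T : Finset α) :
    v S + v T ≤ v (S ∪ T) + v (S ∩ T) := by
  -- induction on card (T \ S)
  generalize hk : (T \ S).card = k
  induction k generalizing T with
  | zero =>
    have hTS : T ⊆ S := by
      rw [Finset.card_eq_zero, Finset.sdiff_eq_empty_iff_subset] at hk
      exact hk
    rw [Finset.union_eq_left.mpr hTS, Finset.inter_eq_right.mpr hTS]
  | succ n ih =>
    have hne : (T \ S).Nonempty := by
      rw [← Finset.card_pos, hk]; omega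
    obtain ⟨i, hi⟩ := hne
    rw [Finset.mem_sdiff] at hi
    set T' := T.erase i with hT'
    have hiT : i ∈ T := hi.1
    have hcard : (T' \ S).card = n := by
      have : T' \ S = (T \ S).erase i := by
        ext x; simp [hT', Finset.mem_sdiff, Finset.mem_erase]; tauto
      rw [this, Finset.card_erase_of_mem (by simp [hi.1, hi.2]), hk]
      omega
    have h1 := ih T' hcard
    have hins : insert i T' = T := Finset.insert_erase hiT
    have hSTins : insert i (S ∪ T') = S ∪ T := by
      rw [← hins]; ext x; simp only [Finset.mem_insert, Finset.mem_union]; tauto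
    have hST'inter : S ∩ T' = S ∩ T := by
      ext x
      simp only [hT', Finset.mem_inter, Finset.mem_erase]
      constructor
      · tauto
      · rintro ⟨hx, hxT⟩
        exact ⟨hx, fun he => (hi.2 (he ▸ hx)), hxT⟩
    have hconvi := hconv i T' (S ∪ T') Finset.subset_union_right
      (by simp [hT', hi.2])
    rw [hins, hSTins] at hconvi
    rw [hST'inter] at h1
    linarith

end AuxSuper

section AuxMain
variable {N : Type*} [Fintype N] [DecidableEq N]

/-- Main rounding lemma: given a core point y of an integer convex game,
there is an integer core point within the floor/ceil box of y. -/
lemma rounding (v : Finset N → ℝ) (hconv : IsConvex v)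
    (hint : ∀ S : Finset N, ∃ m : ℤ, v S = (m : ℝ))
    (y : N → ℝ) (hy1 : (∑ k, y k) = v Finset.univ) (hy2 : ∀ S, v S ≤ ∑ k ∈ S, y k) :
    ∃ x : N → ℤ, ((∑ k, ((x k : ℝ))) = v Finset.univ ∧ ∀ S, v S ≤ ∑ k ∈ S, ((x k : ℝ))) ∧
      ∀ k, ((⌊y k⌋ : ℝ)) ≤ (x k : ℝ) ∧ ((x k : ℝ)) ≤ ((⌈y k⌉ : ℝ)) := by
  classical
  set lo : N → ℝ := fun k => ((⌊y k⌋ : ℤ) : ℝ) with hlo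
  set hi : N → ℝ := fun k => ((⌈y k⌉ : ℤ) : ℝ) with hhi
  set C : Set (N → ℝ) := {z | (∑ k, z k) = v Finset.univ ∧ (∀ S, v S ≤ ∑ k ∈ S, z k) ∧
      ∀ k, lo k ≤ z k ∧ z k ≤ hi k} with hC
  have hsum_cont : ∀ S : Finset N, Continuous (fun z : N → ℝ => ∑ k ∈ S, z k) :=
    fun S => continuous_finset_sum _ (fun k _ => continuous_apply k)
  have hCclosed : IsClosed C := by
    have h1 : IsClosed {z : N → ℝ | (∑ k, z k) = v Finset.univ} :=
      isClosed_eq (hsum_cont Finset.univ) continuous_const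
    have h2 : IsClosed {z : N → ℝ | ∀ S, v S ≤ ∑ k ∈ S, z k} := by
      rw [Set.setOf_forall]
      exact isClosed_iInter fun S => isClosed_le continuous_const (hsum_cont S)
    have h3 : IsClosed {z : N → ℝ | ∀ k, lo k ≤ z k ∧ z k ≤ hi k} := by
      rw [Set.setOf_forall]
      exact isClosed_iInter fun k =>
        (isClosed_le continuous_const (continuous_apply k)).inter
          (isClosed_le (continuous_apply k) continuous_const)
    exact h1.inter (h2.inter h3)
  have hCcomp : IsCompact C := by
    refine IsCompact.of_isClosed_subset (isCompact_Icc (a := lo) (b := hi)) hCclosed ?_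
    intro z hz
    rw [Set.mem_Icc]
    exact ⟨fun k => (hz.2.2 k).1, fun k => (hz.2.2 k).2⟩
  have hCne : C.Nonempty := by
    refine ⟨y, hy1, hy2, fun k => ⟨Int.floor_le _, Int.le_ceil _⟩⟩
  obtain ⟨z, hz⟩ := hCcomp.extremePoints_nonempty hCne
  rw [mem_extremePoints] at hz
  obtain ⟨hzC, hzext⟩ := hz
  -- z is integral
  have hzint : ∀ k, ∃ m : ℤ, z k = (m : ℝ) := by
    by_contra hcon
    push_neg at hcon
    set F : Finset N := Finset.univ.filter (fun k => ¬∃ m : ℤ, z k = (m : ℝ)) with hF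
    have hFne : F.Nonempty := by
      obtain ⟨k, hk⟩ := hcon
      exact ⟨k, by simp [hF, hk]⟩
    set tight : Finset N → Prop := fun S => (∑ k ∈ S, z k) = v S with htight
    have htu : tight Finset.univ := hzC.1
    have hlat : ∀ S T, tight S → tight T → tight (S ∩ T) := by
      intro S T hS hT
      have h1 := supermodular v hconv S T
      have h2 : (∑ k ∈ S ∪ T, z k) + ∑ k ∈ S ∩ T, z k = (∑ k ∈ S, z k) + ∑ k ∈ T, z k :=
        Finset.sum_union_inter
      have h3 := hzC.2.1 (S ∪ T)
      have h4 := hzC.2.1 (S ∩ T)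
      rw [htight] at hS hT ⊢
      linarith
    -- minimal tight set containing a player
    have hex : ∀ i : N, ∃ M : Finset N, (i ∈ M ∧ tight M) ∧
        ∀ S, i ∈ S → tight S → M ⊆ S := by
      intro i
      set Fam : Finset (Finset N) := Finset.univ.powerset.filter
        (fun S => i ∈ S ∧ tight S) with hFam
      have hFamne : Fam.Nonempty := by
        refine ⟨Finset.univ, ?_⟩
        simp only [hFam, Finset.mem_filter, Finset.mem_powerset]
        exact ⟨Finset.subset_univ _, Finset.mem_univ i, htu⟩
      obtain ⟨M, hMF, hMmin⟩ := Fam.exists_min_image Finset.card hFamne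
      simp only [hFam, Finset.mem_filter] at hMF
      refine ⟨M, ⟨hMF.2.1, hMF.2.2⟩, ?_⟩
      intro S hiS hSt
      have hMS : M ∩ S ∈ Fam := by
        simp only [hFam, Finset.mem_filter]
        exact ⟨Finset.mem_powerset.mpr (Finset.subset_univ _),
          Finset.mem_inter.mpr ⟨hMF.2.1, hiS⟩, hlat M S hMF.2.2 hSt⟩
      have hcard := hMmin _ hMS
      have : M ∩ S = M := Finset.eq_of_subset_of_card_le Finset.inter_subset_left hcard
      intro x hx
      rw [← this] at hx
      exact (Finset.mem_inter.mp hx).2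
    choose M hM1 hM2 using hex
    -- pick fractional i with minimal |M i|
    obtain ⟨i, hiF, himin⟩ := F.exists_min_image (fun k => (M k).card) hFne
    have hifrac : ¬∃ m : ℤ, z i = (m : ℝ) := by
      simp only [hF, Finset.mem_filter] at hiF; exact hiF.2
    -- find a second fractional player in M i
    have hMiint : ∃ m : ℤ, v (M i) = (m : ℝ) := hint (M i)
    have hj : ∃ j ∈ M i, j ≠ i ∧ ¬∃ m : ℤ, z j = (m : ℝ) := by
      by_contra hcon2
      push_neg at hcon2
      apply hifrac
      have hall : ∀ k ∈ (M i).erase i, ∃ m : ℤ, z k = (m : ℝ) := by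
        intro k hk
        rw [Finset.mem_erase] at hk
        by_contra hk2
        exact hk2 (hcon2 k hk.2 hk.1)
      have hsum : ∃ m : ℤ, (∑ k ∈ (M i).erase i, z k) = (m : ℝ) := by
        refine Finset.sum_induction z (fun r => ∃ m : ℤ, r = (m : ℝ)) ?_ ⟨0, by simp⟩ hall
        rintro a b ⟨ma, rfl⟩ ⟨mb, rfl⟩
        exact ⟨ma + mb, by push_cast; ring⟩
      obtain ⟨ms, hms⟩ := hsum
      obtain ⟨mv, hmv⟩ := hMiint
      have hzi : z i = v (M i) - ∑ k ∈ (M i).erase i, z k := by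
        have := (hM1 i).2
        rw [htight] at this
        rw [← this, ← Finset.add_sum_erase _ z (hM1 i).1]
        ring
      exact ⟨mv - ms, by rw [hzi, hms, hmv]; push_cast; ring⟩
    obtain ⟨j, hjMi, hjne, hjfrac⟩ := hj
    have hjF : j ∈ F := by
      simp only [hF, Finset.mem_filter]
      exact ⟨Finset.mem_univ _, hjfrac⟩
    -- M j = M i, so tight sets can't separate i and j
    have hMji : M j ⊆ M i := hM2 j (M i) hjMi (hM1 i).2
    have hMeq : M j = M i :=
      Finset.eq_of_subset_of_card_le hMji (himin j hjF)
    have hsep : ∀ S, tight S → (i ∈ S ↔ j ∈ S) := by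
      intro S hS
      constructor
      · intro hiS; exact hM2 i S hiS hS hjMi
      · intro hjS
        have : M j ⊆ S := hM2 j S hjS hS
        rw [hMeq] at this
        exact this (hM1 i).1
    -- minimal slack over separating sets
    set Fam2 : Finset (Finset N) := Finset.univ.powerset.filter
      (fun S => (i ∈ S ∧ j ∉ S) ∨ (j ∈ S ∧ i ∉ S)) with hFam2
    have hFam2ne : Fam2.Nonempty := by
      refine ⟨{i}, ?_⟩
      simp only [hFam2, Finset.mem_filter, Finset.mem_powerset]
      refine ⟨Finset.subset_univ _, Or.inl ⟨Finset.mem_singleton_self i, ?_⟩⟩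
      rw [Finset.mem_singleton]
      exact hjne
    obtain ⟨S0, hS0F, hS0min⟩ :=
      Fam2.exists_min_image (fun S => (∑ k ∈ S, z k) - v S) hFam2ne
    set ε : ℝ := (∑ k ∈ S0, z k) - v S0 with hε
    have hεpos : 0 < ε := by
      rcases lt_or_eq_of_le (hzC.2.1 S0) with h | h
      · linarith
      · exfalso
        have hS0t : tight S0 := h.symm
        have := hsep S0 hS0t
        simp only [hFam2, Finset.mem_filter] at hS0F
        rcases hS0F.2 with ⟨h1, h2⟩ | ⟨h1, h2⟩
        · exact h2 (this.mp h1)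
        · exact h2 (this.mpr h1)
    -- fractional coordinates are strictly inside the box
    have hstrict : ∀ k, ¬(∃ m : ℤ, z k = (m : ℝ)) → lo k < z k ∧ z k < hi k := by
      intro k hk
      have h1 := (hzC.2.2 k).1
      have h2 := (hzC.2.2 k).2
      constructor
      · rcases lt_or_eq_of_le h1 with h | h
        · exact h
        · exact absurd ⟨⌊y k⌋, h.symm⟩ hk
      · rcases lt_or_eq_of_le h2 with h | h
        · exact h
        · exact absurd ⟨⌈y k⌉, h⟩ hk
    obtain ⟨hi1, hi2⟩ := hstrict i hifrac
    obtain ⟨hj1, hj2⟩ := hstrict j hjfrac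
    set t : ℝ := min ε (min (min (z i - lo i) (hi i - z i)) (min (z j - lo j) (hi j - z j)))
      with ht
    have htpos : 0 < t := by
      apply lt_min hεpos
      apply lt_min (lt_min (by linarith) (by linarith)) (lt_min (by linarith) (by linarith))
    -- the perturbation
    have hd : ∀ (a b : N), a ≠ b → (∀ S : Finset N, S ∈ Fam2 → b ∈ S → a ∉ S → True) →
        True := fun _ _ _ _ => trivial
    have hsumd : ∀ (a b : N) (S : Finset N),
        (∑ k ∈ S, ((if k = a then t else 0) - (if k = b then t else 0)))
          = (if a ∈ S then t else 0) - (if b ∈ S then t else 0) := by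
      intro a b S
      rw [Finset.sum_sub_distrib]
      congr 1
      · rw [Finset.sum_ite_eq' S a (fun _ => t)]
      · rw [Finset.sum_ite_eq' S b (fun _ => t)]
    -- generic membership lemma for the two perturbed points
    have hmem : ∀ a b : N, a ≠ b →
        z a + t ≤ hi a → lo b ≤ z b - t →
        (∀ S : Finset N, b ∈ S → a ∉ S → v S ≤ (∑ k ∈ S, z k) - t) →
        (fun k => z k + ((if k = a then t else 0) - (if k = b then t else 0))) ∈ C := by
      intro a b hab hha hhb hslack
      refine ⟨?_, ?_, ?_⟩
      · rw [Finset.sum_add_distrib, hsumd a b Finset.univ]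
        simp [hzC.1]
      · intro S
        rw [Finset.sum_add_distrib, hsumd a b S]
        by_cases haS : a ∈ S <;> by_cases hbS : b ∈ S
        · simp only [haS, hbS, if_true]
          have := hzC.2.1 S; linarith
        · simp only [haS, hbS, if_true, if_false]
          have := hzC.2.1 S; linarith [htpos]
        · simp only [haS, hbS, if_true, if_false]
          have := hslack S hbS haS; linarith
        · simp only [haS, hbS, if_false]
          have := hzC.2.1 S; linarith
      · intro k
        by_cases hka : k = a
        · have e1 : (if k = a then t else 0) = t := if_pos hka
          have e2 : (if k = b then t else 0) = 0 := if_neg (by rw [hka]; exact hab)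
          simp only [e1, e2]
          rw [hka]
          constructor
          · have := (hzC.2.2 a).1; linarith [htpos]
          · linarith [hha]
        · by_cases hkb : k = b
          · have e1 : (if k = a then t else 0) = 0 := if_neg hka
            have e2 : (if k = b then t else 0) = t := if_pos hkb
            simp only [e1, e2]
            rw [hkb]
            constructor
            · linarith [hhb]
            · have := (hzC.2.2 b).2; linarith [htpos]
          · have e1 : (if k = a then t else 0) = 0 := if_neg hka
            have e2 : (if k = b then t else 0) = 0 := if_neg hkb
            simp only [e1, e2]
            have := hzC.2.2 k
            constructor <;> linarith [this.1, this.2]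
    -- slack bounds for both directions
    have hslack_gen : ∀ a b : N, ((a = i ∧ b = j) ∨ (a = j ∧ b = i)) →
        ∀ S : Finset N, b ∈ S → a ∉ S → v S ≤ (∑ k ∈ S, z k) - t := by
      rintro a b hab S hbS haS
      have hSF : S ∈ Fam2 := by
        simp only [hFam2, Finset.mem_filter, Finset.mem_powerset]
        rcases hab with ⟨rfl, rfl⟩ | ⟨rfl, rfl⟩
        · exact ⟨Finset.subset_univ _, Or.inr ⟨hbS, haS⟩⟩
        · exact ⟨Finset.subset_univ _, Or.inl ⟨hbS, haS⟩⟩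
      have := hS0min S hSF
      have htε : t ≤ ε := min_le_left _ _
      linarith
    have hm1 := hmem i j hjne.symm
      (by have : t ≤ hi i - z i := le_trans (min_le_right _ _)
            (le_trans (min_le_left _ _) (min_le_right _ _)); linarith)
      (by have : t ≤ z j - lo j := le_trans (min_le_right _ _)
            (le_trans (min_le_right _ _) (min_le_left _ _)); linarith)
      (hslack_gen i j (Or.inl ⟨rfl, rfl⟩))
    have hm2 := hmem j i hjne
      (by have : t ≤ hi j - z j := le_trans (min_le_right _ _)
            (le_trans (min_le_right _ _) (min_le_right _ _)); linarith)
      (by have : t ≤ z i - lo i := le_trans (min_le_right _ _)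
            (le_trans (min_le_left _ _) (min_le_left _ _)); linarith)
      (hslack_gen j i (Or.inr ⟨rfl, rfl⟩))
    -- z is the midpoint, contradicting extremeness
    have hseg : z ∈ openSegment ℝ
        (fun k => z k + ((if k = i then t else 0) - (if k = j then t else 0)))
        (fun k => z k + ((if k = j then t else 0) - (if k = i then t else 0))) := by
      refine ⟨1/2, 1/2, by norm_num, by norm_num, by norm_num, ?_⟩
      funext k
      simp only [Pi.add_apply, Pi.smul_apply, smul_eq_mul]
      ring
    have heq := (hzext _ hm1 _ hm2 hseg).1
    have hcontra : z i + ((if i = i then t else 0) - (if i = j then t else 0)) = z i :=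
      congrFun heq i
    have e1 : (if i = i then t else 0) = t := if_pos rfl
    have e2 : (if i = j then t else 0) = 0 := if_neg (Ne.symm hjne)
    rw [e1, e2] at hcontra
    linarith [hcontra, htpos]
  -- build the integer vector
  have hzfl : ∀ k, ((⌊z k⌋ : ℝ)) = z k := by
    intro k
    obtain ⟨m, hm⟩ := hzint k
    rw [hm, Int.floor_intCast]
  refine ⟨fun k => ⌊z k⌋, ⟨?_, ?_⟩, ?_⟩
  · rw [← hzC.1]
    refine Finset.sum_congr rfl (fun k _ => ?_)
    simpa using hzfl k
  · intro S
    refine le_trans (hzC.2.1 S) (le_of_eq (Finset.sum_congr rfl (fun k _ => ?_)))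
    simpa using (hzfl k).symm
  · intro k
    have h1 := (hzC.2.2 k).1
    have h2 := (hzC.2.2 k).2
    have := hzfl k
    constructor
    · show ((⌊y k⌋ : ℝ)) ≤ ((⌊z k⌋ : ℝ))
      rw [this]; exact h1
    · show ((⌊z k⌋ : ℝ)) ≤ ((⌈y k⌉ : ℝ))
      rw [this]; exact h2

end AuxMain

theorem stmt4 {N : Type*} [Fintype N] [DecidableEq N] [Nonempty N]
    (v : Finset N → ℝ) (hv0 : v ∅ = 0)
    (hconv : IsConvex v) (hint : IsIntegerGame v) :
    ∃ x : N → ℤ, InCore v (fun i => (x i : ℝ)) ∧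
      ∀ i : N, ⌊SV v i⌋ ≤ x i ∧ x i ≤ ⌈SV v i⌉ := by
  obtain ⟨x, hx, hb⟩ := rounding v hconv hint (SV v) (SV_sum_eq v hv0) (SV_core_ge v hv0 hconv)
  refine ⟨x, ⟨hx.1, hx.2⟩, fun i => ?_⟩
  exact ⟨by exact_mod_cast (hb i).1, by exact_mod_cast (hb i).2⟩
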